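/- Transcript-quotient identity for the payout coin argument: if (E, c, Y, z) and (E, c', Y', z') are two accepting transcripts with the same commitment E ∈ G_T and the same second component s ∈ G₂, then pk^{c−c'} · e(h, s)^{c−c'} · e(∏ᵢ 𝔊ᵢ^{Yᵢ−Y'ᵢ}, s) = e(z·z'⁻¹, g₂). (This is the key algebraic step in extracting a committed coin from two accepting transcripts with distinct challenges.) -/
import Mathlib


/-- Transcript-quotient identity for the payout coin argument. -/
theorem payout_transcript_quotient
    {G G₂ GT : Type*} [CommGroup G] [CommGroup G₂] [CommGroup GT]
    (e : G → G₂ → GT)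
    (e_left : ∀ x y z, e (x * y) z = e x z * e y z)
    (e_right : ∀ x z w, e x (z * w) = e x z * e x w)
    (h : G) (g₂ : G₂) {k : ℕ} (𝔊 : Fin k → G) (pk : GT)
    (E : GT) (s : G₂) (c c' : ℤ) (Y Y' : Fin k → ℤ) (z z' : G)
    (hacc : E * pk ^ c * (e h s) ^ c = e z g₂ * (e (∏ i, 𝔊 i ^ Y i) s)⁻¹)
    (hacc' : E * pk ^ c' * (e h s) ^ c' = e z' g₂ * (e (∏ i, 𝔊 i ^ Y' i) s)⁻¹) :
    pk ^ (c - c') * (e h s) ^ (c - c') * e (∏ i, 𝔊 i ^ (Y i - Y' i)) s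
      = e (z * z'⁻¹) g₂ := by
  set gs : G →* GT := MonoidHom.mk' (fun x => e x s) (fun a b => e_left a b s) with hgs
  set gg : G →* GT := MonoidHom.mk' (fun x => e x g₂) (fun a b => e_left a b g₂) with hgg
  have hGprod : (∏ i, 𝔊 i ^ (Y i - Y' i))
      = (∏ i, 𝔊 i ^ Y i) / (∏ i, 𝔊 i ^ Y' i) := by
    rw [← Finset.prod_div_distrib]
    exact Finset.prod_congr rfl fun i _ => by rw [zpow_sub, div_eq_mul_inv]
  have h1 : e (∏ i, 𝔊 i ^ (Y i - Y' i)) s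
      = e (∏ i, 𝔊 i ^ Y i) s * (e (∏ i, 𝔊 i ^ Y' i) s)⁻¹ := by
    have := map_div gs (∏ i, 𝔊 i ^ Y i) (∏ i, 𝔊 i ^ Y' i)
    rw [hGprod, div_eq_mul_inv]
    exact map_mul_inv gs (∏ i, 𝔊 i ^ Y i) (∏ i, 𝔊 i ^ Y' i)
  have h2 : e (z * z'⁻¹) g₂ = e z g₂ * (e z' g₂)⁻¹ := by
    exact map_mul_inv gg z z'
  have hz : e z g₂ = E * pk ^ c * (e h s) ^ c * e (∏ i, 𝔊 i ^ Y i) s := by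
    rw [hacc]; group
  have hz' : e z' g₂ = E * pk ^ c' * (e h s) ^ c' * e (∏ i, 𝔊 i ^ Y' i) s := by
    rw [hacc']; group
  rw [h1, h2, hz, hz']
  refine Additive.ofMul.injective ?_
  simp only [ofMul_mul, ofMul_zpow, ofMul_inv, sub_zsmul]
  abel
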